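/- Let $A$ and $B$ be integral domains contained in a common integral domain $C$. If $A$ is a unique factorization domain, $C$ is flat as an $A$-module, and $C^* \cap A \subset A^*$, then $Q(A) \cap B = A \cap B$, where $Q(A)$ is the field of fractions of $A$ viewed inside the field of fractions of $C$. -/

import Mathlib

open scoped TensorProduct

open UniqueFactorizationMonoid in
/-- Key lemma: if `A` is a UFD, `C` a flat `A`-algebra (both domains, injective
structure map), units of `C` lying in `A` are units of `A`, and `x * q = p` in `C`
with `p q : A`, `q ≠ 0`, then `x` is in the image of `A`. -/
theorem aux_div {A C : Type*} [CommRing A] [IsDomain A] [UniqueFactorizationMonoid A]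
    [CommRing C] [IsDomain C] [Algebra A C]
    (hinjA : Function.Injective (algebraMap A C))
    [Module.Flat A C]
    (hunits : ∀ a : A, IsUnit (algebraMap A C a) → IsUnit a)
    {x : C} {p q : A} (hq : q ≠ 0) (hx : x * algebraMap A C q = algebraMap A C p) :
    ∃ a : A, algebraMap A C a = x := by
  obtain ⟨p', q', d, hrel, hp', hq'⟩ := exists_reduced_factors' p q hq
  have hd : d ≠ 0 := fun h => hq (by rw [← hq', h, zero_mul])
  have hq'0 : q' ≠ 0 := fun h => hq (by rw [← hq', h, mul_zero])
  -- cancel `d` : x * q' = p'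
  have hx' : x * algebraMap A C q' = algebraMap A C p' := by
    have hdC : algebraMap A C d ≠ 0 := fun h => hd (hinjA (by rw [h, map_zero]))
    apply mul_left_cancel₀ hdC
    have := hx
    rw [← hp', ← hq', map_mul, map_mul] at this
    linear_combination this
  by_cases hp'0 : p' = 0
  · -- then x * q' = 0 and q' ≠ 0, so x = 0
    refine ⟨0, ?_⟩
    rw [map_zero]
    have hq'C : algebraMap A C q' ≠ 0 := fun h => hq'0 (hinjA (by rw [h, map_zero]))
    have : x * algebraMap A C q' = 0 := by rw [hx', hp'0, map_zero]
    exact ((mul_eq_zero.mp this).resolve_right hq'C).symm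
  -- q' is regular on A ⧸ (p')
  set I : Ideal A := Ideal.span {p'} with hI
  have hreg : IsSMulRegular (A ⧸ I) q' := by
    intro a b hab
    obtain ⟨a, rfl⟩ := Ideal.Quotient.mk_surjective (I := I) a
    obtain ⟨b, rfl⟩ := Ideal.Quotient.mk_surjective (I := I) b
    have : (Ideal.Quotient.mk I) (q' * a) = (Ideal.Quotient.mk I) (q' * b) := by
      beta_reduce at hab
      rw [Algebra.smul_def, Algebra.smul_def, Ideal.Quotient.algebraMap_eq, ← map_mul, ← map_mul] at hab; exact hab
    rw [Ideal.Quotient.eq] at this ⊢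
    have hdvd : p' ∣ q' * a - q' * b := Ideal.mem_span_singleton.mp this
    have : p' ∣ q' * (a - b) := by rwa [mul_sub]
    exact Ideal.mem_span_singleton.mpr (hrel.dvd_of_dvd_mul_left this)
  -- transfer regularity to C ⧸ I • ⊤ via flatness
  have hregT : IsSMulRegular ((A ⧸ I) ⊗[A] C) q' := hreg.rTensor C
  have hregC : IsSMulRegular (C ⧸ (I • ⊤ : Submodule A C)) q' := by
    intro u v huv
    have h2 := congrArg (TensorProduct.quotTensorEquivQuotSMul C I).symm huv
    rw [map_smul, map_smul] at h2
    exact (TensorProduct.quotTensorEquivQuotSMul C I).symm.injective (hregT h2)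
  -- q' • x ∈ I • ⊤, hence x ∈ I • ⊤
  have hmem : x ∈ (I • ⊤ : Submodule A C) := by
    have h0 : q' • (Submodule.Quotient.mk x : C ⧸ (I • ⊤ : Submodule A C)) = q' • 0 := by
      rw [smul_zero, ← Submodule.Quotient.mk_smul, Submodule.Quotient.mk_eq_zero]
      have : q' • x = p' • (1 : C) := by
        rw [Algebra.smul_def, Algebra.smul_def, mul_one, mul_comm]
        exact hx'
      rw [this]
      exact Submodule.smul_mem_smul (Ideal.mem_span_singleton_self p') trivial
    exact (Submodule.Quotient.mk_eq_zero _).mp (hregC h0)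
  -- extract c with x = p' * c
  have hex : ∃ c : C, x = algebraMap A C p' * c := by
    refine Submodule.smul_induction_on hmem ?_ ?_
    · intro r hr c _
      obtain ⟨t, rfl⟩ := Ideal.mem_span_singleton.mp hr
      exact ⟨algebraMap A C t * c, by rw [Algebra.smul_def, map_mul, mul_assoc]⟩
    · rintro y z ⟨c, rfl⟩ ⟨e, rfl⟩
      exact ⟨c + e, by ring⟩
  obtain ⟨c, hc⟩ := hex
  -- p' * c * q' = p'  ⇒ c * q' = 1 ⇒ q' unit in C ⇒ q' unit in A
  have hp'C : algebraMap A C p' ≠ 0 := fun h => hp'0 (hinjA (by rw [h, map_zero]))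
  have hcq : c * algebraMap A C q' = 1 := by
    apply mul_left_cancel₀ hp'C
    rw [mul_one, ← mul_assoc, ← hc, hx']
  have huC : IsUnit (algebraMap A C q') := IsUnit.of_mul_eq_one _ (by rw [mul_comm] at hcq; exact hcq)
  obtain ⟨u, hu⟩ := hunits q' huC
  refine ⟨p' * ↑u⁻¹, ?_⟩
  rw [map_mul]
  have : algebraMap A C ↑u⁻¹ * algebraMap A C q' = 1 := by
    rw [← map_mul, ← hu, Units.inv_mul, map_one]
  calc algebraMap A C p' * algebraMap A C ↑u⁻¹
      = x * (algebraMap A C q' * algebraMap A C ↑u⁻¹) := by rw [← hx', mul_assoc]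
    _ = x := by rw [mul_comm (algebraMap A C q'), this, mul_one]

/-- If `A, B` are domains inside a common domain `C`, `A` a UFD, `C` flat over `A`,
and `C* ∩ A ⊆ A*`, then `Q(A) ∩ B = A ∩ B` (inside the fraction field of `C`). -/
theorem stmt_1 {A B C : Type*} [CommRing A] [IsDomain A] [UniqueFactorizationMonoid A]
    [CommRing B] [IsDomain B] [CommRing C] [IsDomain C]
    [Algebra A C] [Algebra B C]
    (hinjA : Function.Injective (algebraMap A C))
    (hinjB : Function.Injective (algebraMap B C))
    [Module.Flat A C]
    (hunits : ∀ a : A, IsUnit (algebraMap A C a) → IsUnit a) :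
    ∀ x : C,
      ((∃ p q : A, q ≠ 0 ∧ x * algebraMap A C q = algebraMap A C p) ∧
        (∃ b : B, algebraMap B C b = x)) ↔
      ((∃ a : A, algebraMap A C a = x) ∧ (∃ b : B, algebraMap B C b = x)) := by
  intro x
  constructor
  · rintro ⟨⟨p, q, hq, hx⟩, hb⟩
    exact ⟨aux_div hinjA hunits hq hx, hb⟩
  · rintro ⟨⟨a, ha⟩, hb⟩
    exact ⟨⟨a, 1, one_ne_zero, by rw [map_one, mul_one, ha]⟩, hb⟩
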